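/- Let P be a finite poset with n ≥ 1 elements that is connected (equivalently, P cannot be expressed as the disjoint sum of two nonempty posets). Then e(P) ≤ (n−1)!. -/

import Mathlib

/-- The number of linear extensions of a finite poset `P`. -/
noncomputable def extNum (P : Type*) [instF : Fintype P] [instO : PartialOrder P] : ℕ :=
  Nat.card {f : P ≃ Fin (Fintype.card P) // ∀ x y : P, x ≤ y → f x ≤ f y}

/-- The comparability graph of a poset: distinct elements are adjacent iff comparable. -/
def compGraph (P : Type*) [PartialOrder P] : SimpleGraph P where
  Adj x y := x ≠ y ∧ (x ≤ y ∨ y ≤ x)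
  symm := ⟨fun _ _ h => ⟨h.1.symm, h.2.symm⟩⟩
  loopless := ⟨fun _ h => h.1 rfl⟩

lemma key_rot {P : Type*} [Fintype P] [PartialOrder P]
    [NeZero (Fintype.card P)]
    (hconn : (compGraph P).Connected)
    (f : P ≃ Fin (Fintype.card P)) (hf : ∀ x y : P, x ≤ y → f x ≤ f y)
    (c : Fin (Fintype.card P))
    (hfc : ∀ x y : P, x ≤ y → f x + c ≤ f y + c) : c = 0 := by
  by_contra hc
  have hn1 : 0 < Fintype.card P := Nat.pos_of_ne_zero (NeZero.ne _)
  have hcpos : 0 < (c : ℕ) := by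
    rcases Nat.eq_zero_or_pos (c : ℕ) with h | h
    · exact absurd (Fin.ext (by simp [h])) hc
    · exact h
  have hcv : (c : ℕ) < Fintype.card P := c.isLt
  have mono : ∀ x y : P, x ≤ y →
      ((f x : ℕ) + c < Fintype.card P ↔ (f y : ℕ) + c < Fintype.card P) := by
    intro x y hxy
    have h1 : (f x : ℕ) ≤ f y := hf x y hxy
    have h2 : ((f x : ℕ) + c) % Fintype.card P ≤ ((f y : ℕ) + c) % Fintype.card P := by
      simpa [Fin.le_def, Fin.val_add] using hfc x y hxy
    constructor
    · intro hx
      by_contra hy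
      push_neg at hy
      have hyv : (f y : ℕ) < Fintype.card P := (f y).isLt
      have hmodx : ((f x : ℕ) + c) % Fintype.card P = (f x : ℕ) + c := Nat.mod_eq_of_lt hx
      have hmody : ((f y : ℕ) + c) % Fintype.card P = (f y : ℕ) + c - Fintype.card P := by
        rw [Nat.mod_eq_sub_mod hy, Nat.mod_eq_of_lt (by omega)]
      omega
    · intro hy; omega
  have adj : ∀ x y : P, (compGraph P).Adj x y →
      ((f x : ℕ) + c < Fintype.card P ↔ (f y : ℕ) + c < Fintype.card P) := by
    intro x y hxy
    rcases hxy.2 with h | h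
    · exact mono x y h
    · exact (mono y x h).symm
  have reach : ∀ x y : P, (compGraph P).Reachable x y →
      ((f x : ℕ) + c < Fintype.card P ↔ (f y : ℕ) + c < Fintype.card P) := by
    intro x y h
    obtain ⟨w⟩ := h
    induction w with
    | nil => exact Iff.rfl
    | cons h p ih => exact (adj _ _ h).trans ih
  have hfa : (f (f.symm ⟨0, hn1⟩) : ℕ) = 0 := by simp
  have hfb : (f (f.symm ⟨Fintype.card P - 1, by omega⟩) : ℕ) = Fintype.card P - 1 := by simp
  have := reach _ _ (hconn.preconnected (f.symm ⟨0, hn1⟩) (f.symm ⟨Fintype.card P - 1, by omega⟩))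
  rw [hfa, hfb] at this
  omega

/-- A connected finite poset on `n ≥ 1` elements has at most `(n-1)!` linear extensions. -/
theorem statement5 (P : Type*) [Fintype P] [PartialOrder P]
    (hn : 1 ≤ Fintype.card P) (hconn : (compGraph P).Connected) :
    extNum P ≤ Nat.factorial (Fintype.card P - 1) := by
  classical
  haveI : NeZero (Fintype.card P) := ⟨by omega⟩
  set Φ : {f : P ≃ Fin (Fintype.card P) // ∀ x y : P, x ≤ y → f x ≤ f y}
      × Fin (Fintype.card P) → (P ≃ Fin (Fintype.card P)) :=
    fun p => p.1.1.trans (Equiv.addRight p.2) with hΦdef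
  have hΦ : Function.Injective Φ := by
    rintro ⟨⟨f, hf⟩, k⟩ ⟨⟨g, hg⟩, l⟩ h
    have hfg : ∀ x : P, f x + k = g x + l := by
      intro x
      have := congrFun (congrArg (fun (e : P ≃ Fin (Fintype.card P)) => (e : P → Fin (Fintype.card P))) h) x
      simpa [hΦdef, Equiv.addRight] using this
    have hgx : ∀ x : P, f x + (k - l) = g x := by
      intro x
      calc f x + (k - l) = f x + k - l := (add_sub_assoc _ _ _).symm
        _ = g x + l - l := by rw [hfg x]
        _ = g x := add_sub_cancel_right _ _
    have hkl : k - l = 0 := by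
      refine key_rot hconn f hf (k - l) ?_
      intro x y hxy
      rw [hgx x, hgx y]
      exact hg x y hxy
    have hk : k = l := by rwa [sub_eq_zero] at hkl
    have hfgeq : f = g := Equiv.ext fun x => by
      have h' := hfg x
      rw [hk] at h'
      exact add_right_cancel h'
    subst hk hfgeq
    rfl
  have h1 : Nat.card ({f : P ≃ Fin (Fintype.card P) // ∀ x y : P, x ≤ y → f x ≤ f y}
      × Fin (Fintype.card P)) ≤ Nat.card (P ≃ Fin (Fintype.card P)) :=
    Nat.card_le_card_of_injective Φ hΦ
  have h2 : Nat.card (P ≃ Fin (Fintype.card P)) = Nat.factorial (Fintype.card P) := by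
    rw [Nat.card_eq_fintype_card, Fintype.card_equiv (Fintype.equivFin P)]
  rw [Nat.card_prod, Nat.card_eq_fintype_card (α := Fin (Fintype.card P)),
    Fintype.card_fin, h2] at h1
  have key : extNum P * Fintype.card P ≤ Nat.factorial (Fintype.card P) := h1
  have hfac : Nat.factorial (Fintype.card P) = Nat.factorial (Fintype.card P - 1) * Fintype.card P := by
    have := Nat.mul_factorial_pred (n := Fintype.card P) (by omega)
    rw [mul_comm] at this
    omega
  rw [hfac] at key
  exact Nat.le_of_mul_le_mul_right key (by omega)
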